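/- For any elements $x,y$ of a Coxeter group $W$, the set $\{z \in W : z \le_L x \text{ and } z \le y\}$ has a maximum element with respect to the Bruhat order, namely $(\psi^R_{y^{-1}}(x))^{-1} x$. -/

import Mathlib

namespace PaperStmt

open scoped Classical

variable {B : Type*} {W : Type*} [Group W] {M : CoxeterMatrix B}

/-- Bruhat (strong) cover: `v = t * u` for a reflection `t`, with `ℓ v = ℓ u + 1`. -/
def BruhatCov (cs : CoxeterSystem M W) (u v : W) : Prop :=
  cs.length v = cs.length u + 1 ∧ ∃ t : W, cs.IsReflection t ∧ v = t * u

/-- The Bruhat (strong) order, generated by the covering relations. -/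
def BruhatLe (cs : CoxeterSystem M W) : W → W → Prop :=
  Relation.ReflTransGen (BruhatCov cs)

/-- Strict Bruhat order. -/
def BruhatLt (cs : CoxeterSystem M W) (u v : W) : Prop :=
  BruhatLe cs u v ∧ u ≠ v

/-- Left weak order: `u ≤_L v` iff `ℓ(v u⁻¹) + ℓ u = ℓ v`. -/
def leftLe (cs : CoxeterSystem M W) (u v : W) : Prop :=
  cs.length (v * u⁻¹) + cs.length u = cs.length v

/-- Right weak order: `u ≤_R v` iff `ℓ u + ℓ(u⁻¹ v) = ℓ v`. -/
def rightLe (cs : CoxeterSystem M W) (u v : W) : Prop :=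
  cs.length u + cs.length (u⁻¹ * v) = cs.length v

/-- Demazure action of a simple reflection: `φ_s(x) = s x` if `s x > x`, else `x`. -/
noncomputable def phi (cs : CoxeterSystem M W) (i : B) (x : W) : W :=
  if BruhatLt cs x (cs.simple i * x) then cs.simple i * x else x

/-- Anti-Demazure action: `ψ_s(x) = s x` if `s x < x`, else `x`. -/
noncomputable def psi (cs : CoxeterSystem M W) (i : B) (x : W) : W :=
  if BruhatLt cs (cs.simple i * x) x then cs.simple i * x else x

/-- Right anti-Demazure action: `ψ^R_s(x) = x s` if `x s < x`, else `x`. -/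
noncomputable def psiR (cs : CoxeterSystem M W) (i : B) (x : W) : W :=
  if BruhatLt cs (x * cs.simple i) x then x * cs.simple i else x

/-- `φ_w` along a word `w = s_1 ⋯ s_n`: `φ_{s_1} ∘ ⋯ ∘ φ_{s_n}`. -/
noncomputable def phiWord (cs : CoxeterSystem M W) (ω : List B) (x : W) : W :=
  ω.foldr (phi cs) x

/-- `ψ_w` along a word `w = s_1 ⋯ s_n`: `ψ_{s_1} ∘ ⋯ ∘ ψ_{s_n}`. -/
noncomputable def psiWord (cs : CoxeterSystem M W) (ω : List B) (x : W) : W :=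
  ω.foldr (psi cs) x

/-- `ψ^R_w` along a word `w = s_1 ⋯ s_n`: `ψ^R_{s_n} ∘ ⋯ ∘ ψ^R_{s_1}`. -/
noncomputable def psiRWord (cs : CoxeterSystem M W) (ω : List B) (x : W) : W :=
  ω.foldl (fun y i => psiR cs i y) x


namespace Aux

open CoxeterSystem List

variable (cs : CoxeterSystem M W)

local prefix:100 "ℓ" => cs.length
local prefix:100 "ss" => cs.simple
local prefix:100 "π" => cs.wordProd
local prefix:100 "lis" => cs.leftInvSeq

lemma lis_cons (i : B) (ω : List B) :
    lis (i :: ω) = ss i :: (lis ω).map (fun z => ss i * z * ss i) := by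
  show ss i :: List.map (MulAut.conj (ss i)) (lis ω) = _
  congr 1
  apply List.map_congr_left
  intro z _
  simp [MulAut.conj_apply, cs.inv_simple]

lemma lis_append (α β : List B) :
    lis (α ++ β) = lis α ++ (lis β).map (fun z => π α * z * (π α)⁻¹) := by
  induction α with
  | nil =>
      simp only [List.nil_append, CoxeterSystem.leftInvSeq_nil, CoxeterSystem.wordProd_nil]
      conv_lhs => rw [show lis β = (lis β).map id from (List.map_id _).symm]
      apply List.map_congr_left
      intro z _
      simp
  | cons c α ih =>
      rw [List.cons_append, lis_cons, lis_cons, ih, List.map_append, List.map_map]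
      simp only [List.cons_append]
      congr 2
      apply List.map_congr_left
      intro z _
      simp only [Function.comp_apply, cs.wordProd_cons, mul_inv_rev, cs.inv_simple]
      group

noncomputable def eta (i : B) : Function.End (W × ℤˣ) :=
  fun q => (ss i * q.1 * ss i, if q.1 = ss i then -q.2 else q.2)

lemma simple_conj_eq_simple_iff (i : B) (u : W) :
    ss i * u * ss i = ss i ↔ u = ss i := by
  constructor
  · intro h
    have h2 : u * ss i = 1 := by
      apply mul_left_cancel (a := ss i)
      rw [← mul_assoc, h, mul_one]
    calc u = u * ss i * ss i := (cs.simple_mul_simple_cancel_right i).symm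
    _ = ss i := by rw [h2, one_mul]
  · rintro rfl
    rw [cs.simple_mul_simple_cancel_right]

lemma simple_conj_injective (i : B) :
    Function.Injective (fun z : W => ss i * z * ss i) := by
  intro z1 z2 h
  have h2 := congrArg (fun w => ss i * w * ss i) h
  simpa [mul_assoc, cs.simple_mul_simple_cancel_left, cs.simple_mul_simple_cancel_right]
    using h2

lemma eta_prod (ω : List B) (t : W) (ε : ℤˣ) :
    (List.prod (ω.map (eta cs))) (t, ε) =
      (π ω * t * (π ω)⁻¹,
        (-1 : ℤˣ) ^ ((lis ω).count (π ω * t * (π ω)⁻¹)) * ε) := by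
  induction ω generalizing t ε with
  | nil =>
      show ((t, ε) : W × ℤˣ) = _
      simp
  | cons i ω ih =>
      rw [List.map_cons, List.prod_cons]
      have happ : (eta cs i * List.prod (ω.map (eta cs))) (t, ε)
          = (eta cs i) ((List.prod (ω.map (eta cs))) (t, ε)) := rfl
      rw [happ, ih, lis_cons, cs.wordProd_cons]
      set u := π ω * t * (π ω)⁻¹ with hu
      have hfirst : ss i * π ω * t * (ss i * π ω)⁻¹ = ss i * u * ss i := by
        rw [hu, mul_inv_rev, cs.inv_simple]
        group
      rw [hfirst]
      have hcount : (List.map (fun z => ss i * z * ss i) (lis ω)).count (ss i * u * ss i)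
          = (lis ω).count u := List.count_map_of_injective _ _ (simple_conj_injective cs i) u
      rw [List.count_cons, hcount]
      have hcond : ((ss i : W) == ss i * u * ss i) = (u == ss i) := by
        by_cases hc : u = ss i
        · rw [hc]; simp [cs.simple_mul_simple_cancel_right]
        · have h2 : (ss i : W) ≠ ss i * u * ss i := fun h =>
            hc ((simple_conj_eq_simple_iff cs i u).mp h.symm)
          simp [hc, h2]
      rw [hcond]
      show ((ss i * u * ss i,
          if u = ss i then -((-1:ℤˣ) ^ (lis ω).count u * ε)
          else (-1:ℤˣ) ^ (lis ω).count u * ε) : W × ℤˣ) = _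
      by_cases hc : u = ss i
      · simp [hc, pow_succ, mul_neg_one, neg_mul]
      · simp [beq_iff_eq, hc]

/-- The word `[i,j,i,j,...]` of length `2*m`. -/
def altrep (i j : B) : ℕ → List B
  | 0 => []
  | m + 1 => i :: j :: altrep i j m

lemma prod_map_eta_altrep (i j : B) (m : ℕ) :
    List.prod ((altrep i j m).map (eta cs)) = (eta cs i * eta cs j) ^ m := by
  induction m with
  | zero => simp [altrep]
  | succ m ih =>
      rw [altrep, List.map_cons, List.map_cons, List.prod_cons, List.prod_cons, ih,
        pow_succ']
      rw [mul_assoc]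

lemma wordProd_altrep (i j : B) (m : ℕ) :
    π (altrep i j m) = (ss i * ss j) ^ m := by
  induction m with
  | zero => simp [altrep]
  | succ m ih =>
      rw [altrep, cs.wordProd_cons, cs.wordProd_cons, ih, pow_succ']
      rw [mul_assoc]

lemma lis_altrep (i j : B) (m : ℕ) :
    lis (altrep i j m) =
      (List.range (2 * m)).map (fun k => (ss i * ss j) ^ k * ss i) := by
  induction m with
  | zero => simp [altrep]
  | succ m ih =>
      have h2 : 2 * (m + 1) = (2 * m) + 1 + 1 := by ring
      rw [altrep, lis_cons, lis_cons, ih, h2, List.range_succ_eq_map,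
        List.range_succ_eq_map]
      simp only [List.map_cons, List.map_map]
      congr 1
      · simp
      congr 1
      · show ss i * ss j * ss i = (ss i * ss j) ^ (Nat.succ 0) * ss i
        simp [pow_one]
      apply List.map_congr_left
      intro k _
      show ss i * (ss j * ((ss i * ss j) ^ k * ss i) * ss j) * ss i
          = (ss i * ss j) ^ (k + 1 + 1) * ss i
      have hp : (ss i * ss j : W) ^ (k + 1 + 1)
          = (ss i * ss j) * ((ss i * ss j) ^ k * (ss i * ss j)) := by
        rw [pow_succ, pow_succ']
        simp only [mul_assoc]
      rw [hp]
      simp only [mul_assoc]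

lemma count_lis_altrep_even (i j : B) (t : W) :
    Even ((lis (altrep i j (M i j))).count t) := by
  rw [lis_altrep, two_mul, List.range_add, List.map_append]
  have : (List.map (fun k => (M i j) + k) (List.range (M i j))).map
        (fun k => (ss i * ss j) ^ k * ss i)
      = (List.range (M i j)).map (fun k => (ss i * ss j) ^ k * ss i) := by
    rw [List.map_map]
    apply List.map_congr_left
    intro k _
    show (ss i * ss j) ^ (M i j + k) * ss i = _
    rw [pow_add, cs.simple_mul_simple_pow i j, one_mul]
  rw [this, List.count_append]
  exact ⟨_, rfl⟩

lemma eta_liftable : CoxeterMatrix.IsLiftable M (eta cs) := by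
  intro i j
  have key : (eta cs i * eta cs j) ^ (M i j) = List.prod ((altrep i j (M i j)).map (eta cs)) :=
    (prod_map_eta_altrep cs i j _).symm
  rw [key]
  funext q
  obtain ⟨t, ε⟩ := q
  have := eta_prod cs (altrep i j (M i j)) t ε
  rw [wordProd_altrep, cs.simple_mul_simple_pow i j] at this
  simp only [one_mul, inv_one, mul_one] at this
  rw [this, (count_lis_altrep_even cs i j t).neg_one_pow, one_mul]
  rfl

/-- The sign homomorphism. -/
noncomputable def Phi : W →* Function.End (W × ℤˣ) :=
  cs.lift ⟨eta cs, eta_liftable cs⟩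

lemma Phi_wordProd (ω : List B) : Phi cs (π ω) = List.prod (ω.map (eta cs)) := by
  rw [CoxeterSystem.wordProd, MonoidHom.map_list_prod, List.map_map]
  congr 1
  apply List.map_congr_left
  intro k _
  show Phi cs (ss k) = eta cs k
  exact cs.lift_apply_simple (eta_liftable cs) k

/-- The parity of the number of occurrences of `u` in the left inversion sequence depends
only on the product of the word. -/
lemma sign_invariance {ω ω' : List B} (h : π ω = π ω') (u : W) :
    ((-1 : ℤˣ) ^ ((lis ω).count u)) = (-1 : ℤˣ) ^ ((lis ω').count u) := by
  have h1 := eta_prod cs ω ((π ω)⁻¹ * u * (π ω)) 1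
  have h2 := eta_prod cs ω' ((π ω')⁻¹ * u * (π ω')) 1
  rw [← Phi_wordProd] at h1 h2
  have e1 : π ω * ((π ω)⁻¹ * u * (π ω)) * (π ω)⁻¹ = u := by group
  have e2 : π ω' * ((π ω')⁻¹ * u * (π ω')) * (π ω')⁻¹ = u := by group
  rw [e1] at h1
  rw [e2] at h2
  rw [h] at h1
  have h3 := h1.symm.trans h2
  have h4 := congrArg Prod.snd h3
  simpa using h4

lemma count_pal_odd (δ : List B) (j : B) :
    Odd ((lis (δ ++ j :: δ.reverse)).count (π δ * ss j * (π δ)⁻¹)) := by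
  induction δ with
  | nil =>
      simp [lis_cons, CoxeterSystem.leftInvSeq_nil]
  | cons c δ ih =>
      have hre : (c :: δ) ++ j :: (c :: δ).reverse
          = c :: ((δ ++ j :: δ.reverse) ++ [c]) := by
        simp
      rw [hre]
      set t' := π δ * ss j * (π δ)⁻¹ with ht'
      set β := δ ++ j :: δ.reverse with hβ
      have hπβ : π β = t' := by
        rw [hβ, cs.wordProd_append, cs.wordProd_cons, cs.wordProd_reverse, ht', mul_assoc]
      have hconcat : (lis (β ++ [c])) = lis β ++ [t' * ss c * t'⁻¹] := by
        have h0 := cs.leftInvSeq_concat β c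
        rw [List.concat_eq_append, List.concat_eq_append, hπβ] at h0
        exact h0
      rw [lis_cons, hconcat, List.map_append]
      have htgt : π (c :: δ) * ss j * (π (c :: δ))⁻¹ = ss c * t' * ss c := by
        rw [cs.wordProd_cons, ht', mul_inv_rev, cs.inv_simple]
        simp only [mul_assoc]
      rw [htgt, List.count_cons, List.count_append]
      have hc1 : (List.map (fun z => ss c * z * ss c) (lis β)).count (ss c * t' * ss c)
          = (lis β).count t' :=
        List.count_map_of_injective _ _ (simple_conj_injective cs c) t'
      have key : ss c * t' * ss c = ss c * (t' * ss c * t'⁻¹) * ss c → t' = ss c := by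
        intro hh
        have h2 := (simple_conj_injective cs c) hh
        have h3 : t' * t' = t' * ss c := by
          have h4 := congrArg (fun z => z * t') h2
          simpa [mul_assoc] using h4
        exact mul_left_cancel h3
      have hmap : (List.map (fun z => ss c * z * ss c) [t' * ss c * t'⁻¹]).count
            (ss c * t' * ss c) = if t' = ss c then 1 else 0 := by
        rw [List.map_cons, List.map_nil]
        by_cases h : t' = ss c
        · rw [if_pos h]
          have heq : (ss c * (t' * ss c * t'⁻¹) * ss c : W) = ss c * t' * ss c := by
            rw [h]
            group
          simp [List.count_cons, heq]
        · rw [if_neg h]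
          have hne : (ss c * (t' * ss c * t'⁻¹) * ss c : W) ≠ ss c * t' * ss c := fun hh =>
            h (key hh.symm)
          simp [List.count_cons, beq_iff_eq, hne]
      have hind : (if ((ss c : W) == ss c * t' * ss c) = true then 1 else 0)
          = if t' = ss c then 1 else 0 := by
        by_cases h : t' = ss c
        · have heq : (ss c * t' * ss c : W) = ss c := (simple_conj_eq_simple_iff cs c t').mpr h
          simp [beq_iff_eq, heq, h]
        · have hne : (ss c : W) ≠ ss c * t' * ss c := fun hh =>
            h ((simple_conj_eq_simple_iff cs c t').mp hh.symm)
          simp [beq_iff_eq, hne, h]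
      rw [hc1, hmap, hind]
      obtain ⟨k, hk⟩ := ih
      by_cases h : t' = ss c
      · rw [if_pos h]
        exact ⟨k + 1, by omega⟩
      · rw [if_neg h]
        exact ⟨k, by omega⟩

/-- **Strong exchange**: if `t` is a reflection with `ℓ(t·w) < ℓ(w)` and `ω` is a reduced
word for `w`, then `t` occurs in the left inversion sequence of `ω`. -/
theorem strong_exchange {ω : List B} {t : W} (ht : cs.IsReflection t)
    (hlt : ℓ (t * π ω) < ℓ (π ω)) : t ∈ lis ω := by
  by_contra hmem
  have htt : t * t = 1 := ht.mul_self
  have htinv : t⁻¹ = t := ht.inv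
  obtain ⟨v, j, htv⟩ := ht
  obtain ⟨δ, hδred, hδ⟩ := cs.exists_reduced_word' v
  obtain ⟨ρ, hρred, hρ⟩ := cs.exists_reduced_word' (t * π ω)
  set pal := δ ++ j :: δ.reverse with hpal
  have hπpal : π pal = t := by
    rw [hpal, cs.wordProd_append, cs.wordProd_cons, cs.wordProd_reverse, ← hδ, htv,
      mul_assoc]
  have hπ : π (pal ++ ρ) = π ω := by
    rw [cs.wordProd_append, hπpal, ← hρ, ← mul_assoc, htt, one_mul]
  have hsign := sign_invariance cs hπ t
  have hc0 : (lis ω).count t = 0 := List.count_eq_zero.mpr hmem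
  have hpalodd : Odd ((lis pal).count t) := by
    have h0 := count_pal_odd cs δ j
    rwa [← hδ, ← htv] at h0
  have hinj : Function.Injective (fun z : W => t * z * t⁻¹) := fun a b hab => by
    have h2 := congrArg (fun z => t⁻¹ * z * t) hab
    simpa [mul_assoc] using h2
  have hconjcount : ((lis ρ).map (fun z => t * z * t⁻¹)).count t = (lis ρ).count t := by
    have h1 : (fun z : W => t * z * t⁻¹) t = t := by
      show t * t * t⁻¹ = t
      rw [htt, one_mul, htinv]
    calc ((lis ρ).map (fun z => t * z * t⁻¹)).count t
        = ((lis ρ).map (fun z => t * z * t⁻¹)).count ((fun z : W => t * z * t⁻¹) t) := by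
          rw [h1]
      _ = (lis ρ).count t := List.count_map_of_injective _ _ hinj t
  have hsplit : (lis (pal ++ ρ)).count t = (lis pal).count t + (lis ρ).count t := by
    rw [lis_append, List.count_append, hπpal, hconjcount]
  rw [hsplit, hc0, pow_zero] at hsign
  have hρodd : Odd ((lis ρ).count t) := by
    rcases Nat.even_or_odd ((lis ρ).count t) with he | ho
    · exfalso
      have : Odd ((lis pal).count t + (lis ρ).count t) := hpalodd.add_even he
      rw [this.neg_one_pow] at hsign
      exact (by decide : (-1 : ℤˣ) ≠ 1) hsign
    · exact ho
  have hmemρ : t ∈ lis ρ := by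
    rw [← List.count_pos_iff]
    obtain ⟨k, hk⟩ := hρodd
    omega
  have hinv2 := cs.isLeftInversion_of_mem_leftInvSeq hρred hmemρ
  have : ℓ (t * π ρ) < ℓ (π ρ) := hinv2.2
  rw [← hρ, ← mul_assoc, htt, one_mul] at this
  exact lt_asymm hlt this

/-- Exchange property, word form. -/
theorem exchange {ω : List B} {t : W} (ht : cs.IsReflection t)
    (hlt : ℓ (t * π ω) < ℓ (π ω)) :
    ∃ τ, τ <+ ω ∧ τ.length + 1 = ω.length ∧ π τ = t * π ω := by
  have hmem : t ∈ lis ω := strong_exchange cs ht hlt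
  obtain ⟨j, hj, hget⟩ := List.mem_iff_getElem.mp hmem
  rw [cs.length_leftInvSeq] at hj
  refine ⟨ω.eraseIdx j, List.eraseIdx_sublist ω j, List.length_eraseIdx_add_one hj, ?_⟩
  have h1 := cs.getD_leftInvSeq_mul_wordProd ω j
  rw [List.getD_eq_getElem _ 1 (by rw [cs.length_leftInvSeq]; exact hj), hget] at h1
  rw [← h1]

lemma le_length {u v : W} (h : BruhatLe cs u v) : ℓ u ≤ ℓ v := by
  induction h with
  | refl => exact le_refl _
  | tail _ hcov ih => rw [hcov.1]; omega

lemma le_eq_of_length_ge {u v : W} (h : BruhatLe cs u v) (hl : ℓ v ≤ ℓ u) : u = v := by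
  rcases Relation.ReflTransGen.cases_tail h with he | ⟨c, hc, hcov⟩
  · exact he.symm
  · have h1 := le_length cs hc
    rw [hcov.1] at hl
    omega

lemma cov_simple_left {i : B} {w : W} (h : ℓ (ss i * w) < ℓ w) :
    BruhatCov cs (ss i * w) w := by
  refine ⟨?_, ss i, cs.isReflection_simple i, (cs.simple_mul_simple_cancel_left i).symm⟩
  rcases cs.length_simple_mul w i with h1 | h1 <;> omega

lemma cov_simple_left' {i : B} {w : W} (h : ℓ w < ℓ (ss i * w)) :
    BruhatCov cs w (ss i * w) := by
  refine ⟨?_, ss i, cs.isReflection_simple i, rfl⟩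
  rcases cs.length_simple_mul w i with h1 | h1 <;> omega

lemma cov_simple_right {i : B} {w : W} (h : ℓ (w * ss i) < ℓ w) :
    BruhatCov cs (w * ss i) w := by
  refine ⟨?_, w * ss i * w⁻¹, ⟨w, i, rfl⟩, ?_⟩
  · rcases cs.length_mul_simple w i with h1 | h1 <;> omega
  · simp [mul_assoc, cs.simple_mul_simple_self]

lemma bruhatLt_iff {x : W} {i : B} : BruhatLt cs (x * ss i) x ↔ ℓ (x * ss i) < ℓ x := by
  constructor
  · intro h
    exact lt_of_le_of_ne (le_length cs h.1) (cs.length_mul_simple_ne x i)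
  · intro h
    exact ⟨Relation.ReflTransGen.single (cov_simple_right cs h),
      fun he => (cs.length_mul_simple_ne x i) (congrArg _ he)⟩

lemma psiR_eq (i : B) (x : W) :
    psiR cs i x = if ℓ (x * ss i) < ℓ x then x * ss i else x := by
  by_cases h : ℓ (x * ss i) < ℓ x
  · rw [psiR, if_pos ((bruhatLt_iff cs).mpr h), if_pos h]
  · rw [psiR, if_neg (fun hlt => h ((bruhatLt_iff cs).mp hlt)), if_neg h]

lemma le_inv {u v : W} (h : BruhatLe cs u v) : BruhatLe cs u⁻¹ v⁻¹ := by
  induction h with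
  | refl => exact Relation.ReflTransGen.refl
  | @tail c v hc hcov ih =>
      refine Relation.ReflTransGen.tail ih ?_
      obtain ⟨hlen, t, ht, hct⟩ := hcov
      refine ⟨by rw [cs.length_inv, cs.length_inv, hlen], c⁻¹ * t * c, ?_, ?_⟩
      · have := ht.conj c⁻¹
        rwa [inv_inv] at this
      · rw [hct, mul_inv_rev, ht.inv]
        group

/-- If `v ≤ w` then every reduced word for `w` contains a reduced subword for `v`. -/
theorem le_reduced_subword {v w : W} (h : BruhatLe cs v w) :
    ∀ ρ, cs.IsReduced ρ → π ρ = w → ∃ τ, τ <+ ρ ∧ cs.IsReduced τ ∧ π τ = v := by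
  induction h using Relation.ReflTransGen.head_induction_on with
  | refl =>
      intro ρ hρ hπ
      exact ⟨ρ, List.Sublist.refl ρ, hρ, hπ⟩
  | @head a c h' hle ih =>
      intro ρ hρ hπ
      obtain ⟨τc, hsub, hred, hπc⟩ := ih ρ hρ hπ
      obtain ⟨hlen, t, ht, hct⟩ := h'
      have htc : t * π τc = a := by
        rw [hπc, hct, ← mul_assoc, ht.mul_self, one_mul]
      have h1 : ℓ (t * π τc) < ℓ (π τc) := by
        rw [htc, hπc]
        omega
      obtain ⟨τ, hτsub, hτlen, hτπ⟩ := exchange cs ht h1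
      refine ⟨τ, hτsub.trans hsub, ?_, by rw [hτπ, htc]⟩
      show ℓ (π τ) = τ.length
      rw [hτπ, htc]
      have h2 : ℓ c = τc.length := by
        rw [← hπc]
        exact hred
      omega

theorem master (n : ℕ) :
    (∀ ρ τ : List B, cs.IsReduced ρ → ρ.length = n → τ <+ ρ → cs.IsReduced τ →
      BruhatLe cs (π τ) (π ρ)) ∧
    (∀ v : W, ℓ v = n → ∀ (u : W) (i : B), BruhatLe cs u v → ℓ (ss i * u) = ℓ u + 1 →
      ℓ (ss i * v) = ℓ v + 1 → BruhatLe cs (ss i * u) (ss i * v)) ∧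
    (∀ w : W, ℓ w = n → ∀ (u : W) (i : B), BruhatLe cs u w → ℓ (ss i * w) + 1 = ℓ w →
      ℓ (ss i * u) = ℓ u + 1 → BruhatLe cs (ss i * u) w) := by
  induction n using Nat.strong_induction_on with
  | _ n ih =>
  have hZ : ∀ v : W, ℓ v = n → ∀ (u : W) (i : B), BruhatLe cs u v → ℓ (ss i * u) = ℓ u + 1 →
      ℓ (ss i * v) = ℓ v + 1 → BruhatLe cs (ss i * u) (ss i * v) := by
    intro v hv u i hu hau hav
    rcases Relation.ReflTransGen.cases_tail hu with he | ⟨c, hc, hcov⟩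
    · rw [he]
      exact Relation.ReflTransGen.refl
    · obtain ⟨hlen, t, ht, hct⟩ := hcov
      have hcn : ℓ c = n - 1 := by omega
      have hlt : n - 1 < n := by omega
      rcases cs.length_simple_mul c i with hic | hic
      · have h1 : BruhatLe cs (ss i * u) (ss i * c) :=
          (ih (n-1) hlt).2.1 c hcn u i hc hau hic
        refine Relation.ReflTransGen.tail h1 ?_
        refine ⟨by omega, ss i * t * (ss i)⁻¹, ht.conj (ss i), ?_⟩
        rw [hct, cs.inv_simple]
        simp [mul_assoc, cs.simple_mul_simple_cancel_left]
      · have h1 : BruhatLe cs (ss i * u) c :=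
          (ih (n-1) hlt).2.2 c hcn u i hc (by omega) hau
        have h2 : BruhatLe cs (ss i * u) v :=
          Relation.ReflTransGen.tail h1 ⟨hlen, t, ht, hct⟩
        exact Relation.ReflTransGen.tail h2 (cov_simple_left' cs (by omega))
  have hS : ∀ ρ τ : List B, cs.IsReduced ρ → ρ.length = n → τ <+ ρ → cs.IsReduced τ →
      BruhatLe cs (π τ) (π ρ) := by
    intro ρ τ hρ hρn hsub hτ
    cases ρ with
    | nil =>
        rw [List.sublist_nil.mp hsub]
        exact Relation.ReflTransGen.refl
    | cons i ρ' =>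
        have hρ' : cs.IsReduced ρ' := hρ.drop 1
        have hn1 : ρ'.length = n - 1 := by
          simp only [List.length_cons] at hρn
          omega
        have hnpos : 1 ≤ n := by
          simp only [List.length_cons] at hρn
          omega
        have hlt : n - 1 < n := by omega
        have hlρ : ℓ (π (i :: ρ')) = n := by rw [hρ, hρn]
        have hlρ' : ℓ (π ρ') = n - 1 := by rw [hρ', hn1]
        have hascρ : ℓ (ss i * π ρ') = ℓ (π ρ') + 1 := by
          rw [← cs.wordProd_cons, hlρ, hlρ']
          omega
        cases hsub with
        | cons _ h =>
            have h1 : BruhatLe cs (π τ) (π ρ') :=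
              (ih (n-1) hlt).1 ρ' τ hρ' hn1 h hτ
            rw [cs.wordProd_cons]
            exact Relation.ReflTransGen.tail h1 (cov_simple_left' cs (by omega))
        | cons_cons _ h =>
            rename_i τ'
            have hτ' : cs.IsReduced τ' := hτ.drop 1
            have h1 : BruhatLe cs (π τ') (π ρ') :=
              (ih (n-1) hlt).1 ρ' τ' hρ' hn1 h hτ'
            have hascτ : ℓ (ss i * π τ') = ℓ (π τ') + 1 := by
              have h2 : ℓ (π (i :: τ')) = (i :: τ').length := hτ
              rw [cs.wordProd_cons] at h2
              have h3 : ℓ (π τ') = τ'.length := hτ'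
              rw [h2, h3]
              simp
            rw [cs.wordProd_cons, cs.wordProd_cons]
            exact (ih (n-1) hlt).2.1 (π ρ') hlρ' (π τ') i h1 hascτ hascρ
  have hZ2 : ∀ w : W, ℓ w = n → ∀ (u : W) (i : B), BruhatLe cs u w → ℓ (ss i * w) + 1 = ℓ w →
      ℓ (ss i * u) = ℓ u + 1 → BruhatLe cs (ss i * u) w := by
    intro w hw u i hu hdesc hasc
    obtain ⟨ρ₁, hρ₁red, hρ₁⟩ := cs.exists_reduced_word' (ss i * w)
    have hπρ : π (i :: ρ₁) = w := by
      rw [cs.wordProd_cons, ← hρ₁, cs.simple_mul_simple_cancel_left]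
    have hρ₁len : ρ₁.length = n - 1 := by
      have h0 : ℓ (ss i * w) = ρ₁.length := by rw [hρ₁]; exact hρ₁red
      omega
    have hρlen : (i :: ρ₁).length = n := by
      simp only [List.length_cons]
      omega
    have hρred : cs.IsReduced (i :: ρ₁) := by
      show ℓ (π (i :: ρ₁)) = (i :: ρ₁).length
      rw [hπρ, hρlen, hw]
    obtain ⟨τ, hτsub, hτred, hτπ⟩ := le_reduced_subword cs hu (i :: ρ₁) hρred hπρ
    cases hτsub with
    | cons _ h =>
        have hlu : ℓ u = τ.length := by rw [← hτπ]; exact hτred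
        have hred2 : cs.IsReduced (i :: τ) := by
          show ℓ (π (i :: τ)) = (i :: τ).length
          rw [cs.wordProd_cons, hτπ, hasc]
          simp [hlu]
        have h2 := hS (i :: ρ₁) (i :: τ) hρred hρlen (h.cons₂ i) hred2
        rw [cs.wordProd_cons, hτπ, hπρ] at h2
        exact h2
    | cons_cons _ h =>
        exfalso
        rename_i τ'
        have h1 : ss i * π τ' = u := by rw [← cs.wordProd_cons, hτπ]
        have h2 : π τ' = ss i * u := by
          rw [← h1, cs.simple_mul_simple_cancel_left]
        have h3 : ℓ (π τ') ≤ τ'.length := cs.length_wordProd_le τ'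
        have h4 : ℓ u = τ'.length + 1 := by
          have h5 : ℓ (π (i :: τ')) = (i :: τ').length := hτred
          rw [hτπ] at h5
          simpa using h5
        rw [h2, hasc] at h3
        omega
  exact ⟨hS, hZ, hZ2⟩

/-- Subword property. -/
theorem subword_le {ρ τ : List B} (hρ : cs.IsReduced ρ) (hsub : τ <+ ρ)
    (hτ : cs.IsReduced τ) : BruhatLe cs (π τ) (π ρ) :=
  (master cs ρ.length).1 ρ τ hρ rfl hsub hτ

lemma cons_word {w : W} {i : B} (hw : ℓ (ss i * w) < ℓ w) :
    ∃ ρ₁, cs.IsReduced ρ₁ ∧ π ρ₁ = ss i * w ∧ cs.IsReduced (i :: ρ₁) ∧ π (i :: ρ₁) = w := by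
  obtain ⟨ρ₁, hρ₁red, hρ₁⟩ := cs.exists_reduced_word' (ss i * w)
  have hπρ : π (i :: ρ₁) = w := by
    rw [cs.wordProd_cons, ← hρ₁, cs.simple_mul_simple_cancel_left]
  have h0 : ℓ (ss i * w) = ρ₁.length := by rw [hρ₁]; exact hρ₁red
  have h1 : ℓ (ss i * w) + 1 = ℓ w := by rcases cs.length_simple_mul w i with h2 | h2 <;> omega
  refine ⟨ρ₁, hρ₁red, hρ₁.symm, ?_, hπρ⟩
  show ℓ (π (i :: ρ₁)) = (i :: ρ₁).length
  rw [hπρ]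
  simp only [List.length_cons]
  omega

lemma lift_left_i {u w : W} {i : B} (hu : BruhatLe cs u w) (hw : ℓ (ss i * w) < ℓ w)
    (hud : ℓ (ss i * u) < ℓ u) : BruhatLe cs (ss i * u) (ss i * w) := by
  obtain ⟨ρ₁, hρ₁red, hρ₁, hρred, hπρ⟩ := cons_word cs hw
  obtain ⟨τ, hτsub, hτred, hτπ⟩ := le_reduced_subword cs hu (i :: ρ₁) hρred hπρ
  cases hτsub with
  | cons _ h =>
      have h1 : BruhatLe cs u (ss i * w) := by
        have h2 := subword_le cs hρ₁red h hτred
        rwa [hτπ, hρ₁] at h2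
      exact Relation.ReflTransGen.head (cov_simple_left cs hud) h1
  | cons_cons _ h =>
      rename_i τ'
      have hπτ' : π τ' = ss i * u := by
        have h1 : ss i * π τ' = u := by rw [← cs.wordProd_cons, hτπ]
        rw [← h1, cs.simple_mul_simple_cancel_left]
      have hτ'red : cs.IsReduced τ' := hτred.drop 1
      have h2 := subword_le cs hρ₁red h hτ'red
      rwa [hπτ', hρ₁] at h2

lemma lift_left_ii {u w : W} {i : B} (hu : BruhatLe cs u w) (hw : ℓ (ss i * w) < ℓ w)
    (hua : ℓ u < ℓ (ss i * u)) : BruhatLe cs u (ss i * w) := by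
  obtain ⟨ρ₁, hρ₁red, hρ₁, hρred, hπρ⟩ := cons_word cs hw
  obtain ⟨τ, hτsub, hτred, hτπ⟩ := le_reduced_subword cs hu (i :: ρ₁) hρred hπρ
  cases hτsub with
  | cons _ h =>
      have h2 := subword_le cs hρ₁red h hτred
      rwa [hτπ, hρ₁] at h2
  | cons_cons _ h =>
      exfalso
      rename_i τ'
      have h1 : ss i * π τ' = u := by rw [← cs.wordProd_cons, hτπ]
      have h2 : π τ' = ss i * u := by rw [← h1, cs.simple_mul_simple_cancel_left]
      have h3 : ℓ (π τ') ≤ τ'.length := cs.length_wordProd_le τ'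
      have h4 : ℓ u = τ'.length + 1 := by
        have h5 : ℓ (π (i :: τ')) = (i :: τ').length := hτred
        rw [hτπ] at h5
        simpa using h5
      rw [h2] at h3
      omega

lemma lift_right_i {z y : W} {i : B} (hz : BruhatLe cs z y) (hy : ℓ (y * ss i) < ℓ y)
    (hzd : ℓ (z * ss i) < ℓ z) : BruhatLe cs (z * ss i) (y * ss i) := by
  have e : ∀ a : W, ss i * a⁻¹ = (a * ss i)⁻¹ := fun a => by
    rw [mul_inv_rev, cs.inv_simple]
  have h1 : ℓ (ss i * y⁻¹) < ℓ y⁻¹ := by rw [e, cs.length_inv, cs.length_inv]; exact hy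
  have h2 : ℓ (ss i * z⁻¹) < ℓ z⁻¹ := by rw [e, cs.length_inv, cs.length_inv]; exact hzd
  have h3 := lift_left_i cs (le_inv cs hz) h1 h2
  rw [e, e] at h3
  have h4 := le_inv cs h3
  rwa [inv_inv, inv_inv] at h4

lemma lift_right_ii {z y : W} {i : B} (hz : BruhatLe cs z y) (hy : ℓ (y * ss i) < ℓ y)
    (hza : ℓ z < ℓ (z * ss i)) : BruhatLe cs z (y * ss i) := by
  have e : ∀ a : W, ss i * a⁻¹ = (a * ss i)⁻¹ := fun a => by
    rw [mul_inv_rev, cs.inv_simple]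
  have h1 : ℓ (ss i * y⁻¹) < ℓ y⁻¹ := by rw [e, cs.length_inv, cs.length_inv]; exact hy
  have h2 : ℓ z⁻¹ < ℓ (ss i * z⁻¹) := by rw [e, cs.length_inv, cs.length_inv]; exact hza
  have h3 := lift_left_ii cs (le_inv cs hz) h1 h2
  rw [e] at h3
  have h4 := le_inv cs h3
  rwa [inv_inv, inv_inv] at h4

/-- If `z ≤ y` and `ω` is a reduced word for `y⁻¹`, then `ψ^R_ω` kills `z`. -/
theorem psiRWord_eq_one_of_le : ∀ (ω : List B), cs.IsReduced ω → ∀ y z : W,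
    π ω = y⁻¹ → BruhatLe cs z y → psiRWord cs ω z = 1 := by
  intro ω
  induction ω with
  | nil =>
      intro _ y z hπ hz
      have hy : y = 1 := by
        have h1 : y⁻¹ = 1 := by rw [← hπ, cs.wordProd_nil]
        simpa using congrArg Inv.inv h1
      rw [hy] at hz
      have h2 := le_length cs hz
      rw [cs.length_one] at h2
      have h3 : z = 1 := by
        rw [← cs.length_eq_zero_iff]
        omega
      rw [show psiRWord cs [] z = z from rfl, h3]
  | cons i ω' ih =>
      intro hred y z hπ hz
      have hred' : cs.IsReduced ω' := hred.drop 1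
      have hπ' : π ω' = (y * ss i)⁻¹ := by
        have h1 : ss i * π ω' = y⁻¹ := by rw [← cs.wordProd_cons, hπ]
        rw [mul_inv_rev, cs.inv_simple, ← h1, cs.simple_mul_simple_cancel_left]
      have hlen : ℓ (y * ss i) < ℓ y := by
        have h1 : ℓ (π ω') = ω'.length := hred'
        have h2 : ℓ (π (i :: ω')) = (i :: ω').length := hred
        rw [hπ, cs.length_inv] at h2
        rw [hπ', cs.length_inv] at h1
        simp only [List.length_cons] at h2
        omega
      show psiRWord cs ω' (psiR cs i z) = 1
      rw [psiR_eq]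
      by_cases hd : ℓ (z * ss i) < ℓ z
      · rw [if_pos hd]
        exact ih hred' (y * ss i) (z * ss i) hπ' (lift_right_i cs hz hlen hd)
      · rw [if_neg hd]
        have h1 : ℓ z < ℓ (z * ss i) := by
          rcases cs.length_mul_simple z i with h2 | h2 <;> omega
        exact ih hred' (y * ss i) z hπ' (lift_right_ii cs hz hlen h1)

lemma stepA {z x : W} (i : B) (h : leftLe cs z x) (hz : ℓ (z * ss i) < ℓ z) :
    ℓ (x * ss i) < ℓ x ∧ leftLe cs (z * ss i) (x * ss i) := by
  have hh : ℓ (x * z⁻¹) + ℓ z = ℓ x := h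
  have hxz : x * ss i = (x * z⁻¹) * (z * ss i) := by group
  have h1 : ℓ (x * ss i) ≤ ℓ (x * z⁻¹) + ℓ (z * ss i) := by
    rw [hxz]
    exact cs.length_mul_le _ _
  have hz1 : ℓ (z * ss i) + 1 = ℓ z := by rcases cs.length_mul_simple z i with h2 | h2 <;> omega
  have hd := cs.length_mul_simple x i
  have hlt : ℓ (x * ss i) < ℓ x := by omega
  refine ⟨hlt, ?_⟩
  show ℓ ((x * ss i) * (z * ss i)⁻¹) + ℓ (z * ss i) = ℓ (x * ss i)
  have he : (x * ss i) * (z * ss i)⁻¹ = x * z⁻¹ := by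
    rw [mul_inv_rev, cs.inv_simple]
    simp [mul_assoc, cs.simple_mul_simple_cancel_left]
  rw [he]
  omega

lemma exchange_right {ω : List B} {i : B} (hlt : ℓ (π ω * ss i) < ℓ (π ω)) :
    ∃ τ, τ <+ ω ∧ τ.length + 1 = ω.length ∧ π τ = π ω * ss i := by
  have h1 : ℓ (ss i * π ω.reverse) < ℓ (π ω.reverse) := by
    rw [cs.wordProd_reverse]
    have e : ss i * (π ω)⁻¹ = (π ω * ss i)⁻¹ := by rw [mul_inv_rev, cs.inv_simple]
    rw [e, cs.length_inv, cs.length_inv]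
    exact hlt
  obtain ⟨τ', hsub, hlen, hπ⟩ := exchange cs (cs.isReflection_simple i) h1
  refine ⟨τ'.reverse, ?_, ?_, ?_⟩
  · have h2 := hsub.reverse
    rwa [List.reverse_reverse] at h2
  · simpa using hlen
  · rw [cs.wordProd_reverse, hπ, cs.wordProd_reverse, mul_inv_rev, inv_inv, cs.inv_simple]

lemma stepB {z x : W} (i : B) (h : leftLe cs z x) (hz : ℓ z < ℓ (z * ss i))
    (hx : ℓ (x * ss i) < ℓ x) : leftLe cs z (x * ss i) := by
  have hh : ℓ (x * z⁻¹) + ℓ z = ℓ x := h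
  obtain ⟨ρw, hρwred, hρw⟩ := cs.exists_reduced_word' (x * z⁻¹)
  obtain ⟨ρz, hρzred, hρz⟩ := cs.exists_reduced_word' z
  have hπρ : π (ρw ++ ρz) = x := by
    rw [cs.wordProd_append, ← hρw, ← hρz]
    group
  have hlw : ℓ (x * z⁻¹) = ρw.length := by rw [hρw]; exact hρwred
  have hlz : ℓ z = ρz.length := by rw [hρz]; exact hρzred
  have hlt2 : ℓ (π (ρw ++ ρz) * ss i) < ℓ (π (ρw ++ ρz)) := by rw [hπρ]; exact hx
  obtain ⟨τ, hsub, hτlen, hτπ⟩ := exchange_right cs hlt2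
  rw [hπρ] at hτπ
  rcases List.sublist_append_iff.mp hsub with ⟨τ₁, τ₂, rfl, h1, h2⟩
  have hlen1 : τ₁.length ≤ ρw.length := h1.length_le
  have hlen2 : τ₂.length ≤ ρz.length := h2.length_le
  have hlensum : τ₁.length + τ₂.length + 1 = ρw.length + ρz.length := by
    simpa using hτlen
  by_cases hcase : τ₂.length = ρz.length
  · have hτ₂ : τ₂ = ρz := h2.eq_of_length hcase
    have hτ₁π : (x * ss i) * z⁻¹ = π τ₁ := by
      rw [← hτπ, cs.wordProd_append, hτ₂, ← hρz]
      group
    have hb1 : ℓ (π τ₁) ≤ τ₁.length := cs.length_wordProd_le τ₁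
    have hb2 : ℓ (x * ss i) ≤ ℓ ((x * ss i) * z⁻¹) + ℓ z := by
      have h3 := cs.length_mul_le ((x * ss i) * z⁻¹) z
      rwa [inv_mul_cancel_right] at h3
    have hxlen : ℓ (x * ss i) + 1 = ℓ x := by
      rcases cs.length_mul_simple x i with h4 | h4 <;> omega
    show ℓ ((x * ss i) * z⁻¹) + ℓ z = ℓ (x * ss i)
    rw [hτ₁π] at hb2 ⊢
    omega
  · exfalso
    have hτ₁ : τ₁ = ρw := h1.eq_of_length (by omega)
    have hτ₂π : π τ₂ = z * ss i := by
      have h3 : (x * z⁻¹) * π τ₂ = x * ss i := by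
        rw [← hτπ, cs.wordProd_append, hτ₁, ← hρw]
      have h4 : π τ₂ = (x * z⁻¹)⁻¹ * (x * ss i) := by
        rw [← h3]
        group
      rw [h4]
      group
    have h5 : ℓ (π τ₂) ≤ τ₂.length := cs.length_wordProd_le τ₂
    rw [hτ₂π] at h5
    omega

theorem evolve (ω : List B) : ∀ x z : W, leftLe cs z x →
    ∃ u v : List B, v <+ u ∧ u <+ ω ∧
      psiRWord cs ω x = x * π u ∧ psiRWord cs ω z = z * π v ∧
      ℓ (psiRWord cs ω x) + u.length = ℓ x ∧ ℓ (psiRWord cs ω z) + v.length = ℓ z ∧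
      leftLe cs (psiRWord cs ω z) (psiRWord cs ω x) := by
  induction ω with
  | nil =>
      intro x z h
      exact ⟨[], [], List.Sublist.slnil, List.Sublist.slnil, by simp [psiRWord],
        by simp [psiRWord], by simp [psiRWord], by simp [psiRWord], h⟩
  | cons i ω' ih =>
      intro x z h
      rw [show psiRWord cs (i :: ω') x = psiRWord cs ω' (psiR cs i x) from rfl,
        show psiRWord cs (i :: ω') z = psiRWord cs ω' (psiR cs i z) from rfl,
        psiR_eq cs i x, psiR_eq cs i z]
      by_cases hz : ℓ (z * ss i) < ℓ z
      · rw [if_pos hz]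
        obtain ⟨hx, h'⟩ := stepA cs i h hz
        rw [if_pos hx]
        obtain ⟨u, v, hvu, huω, hxu, hzv, hlx, hlz, hfin⟩ := ih (x * ss i) (z * ss i) h'
        have hxlen : ℓ (x * ss i) + 1 = ℓ x := by
          rcases cs.length_mul_simple x i with h2 | h2 <;> omega
        have hzlen : ℓ (z * ss i) + 1 = ℓ z := by
          rcases cs.length_mul_simple z i with h2 | h2 <;> omega
        exact ⟨i :: u, i :: v, hvu.cons₂ i, huω.cons₂ i,
          by rw [hxu, cs.wordProd_cons, mul_assoc],
          by rw [hzv, cs.wordProd_cons, mul_assoc],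
          by simp only [List.length_cons]; omega,
          by simp only [List.length_cons]; omega,
          hfin⟩
      · rw [if_neg hz]
        have hz' : ℓ z < ℓ (z * ss i) := by
          rcases cs.length_mul_simple z i with h2 | h2 <;> omega
        by_cases hx : ℓ (x * ss i) < ℓ x
        · rw [if_pos hx]
          have h' := stepB cs i h hz' hx
          obtain ⟨u, v, hvu, huω, hxu, hzv, hlx, hlz, hfin⟩ := ih (x * ss i) z h'
          have hxlen : ℓ (x * ss i) + 1 = ℓ x := by
            rcases cs.length_mul_simple x i with h2 | h2 <;> omega
          exact ⟨i :: u, v, hvu.cons i, huω.cons₂ i,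
            by rw [hxu, cs.wordProd_cons, mul_assoc],
            hzv,
            by simp only [List.length_cons]; omega,
            hlz,
            hfin⟩
        · rw [if_neg hx]
          obtain ⟨u, v, hvu, huω, hxu, hzv, hlx, hlz, hfin⟩ := ih x z h
          exact ⟨u, v, hvu, huω.cons i, hxu, hzv, hlx, hlz, hfin⟩

lemma leftLe_refl (x : W) : leftLe cs x x := by
  show ℓ (x * x⁻¹) + ℓ x = ℓ x
  simp

end Aux

/-- `{z | z ≤_L x and z ≤ y}` has Bruhat-maximum `(ψ^R_{y⁻¹}(x))⁻¹ · x`, where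
`ψ^R_{y⁻¹}` is computed along any reduced word `ω` for `y⁻¹`. -/
theorem stmt17 (cs : CoxeterSystem M W) (x y : W) (ω : List B)
    (hred : cs.IsReduced ω) (hω : cs.wordProd ω = y⁻¹) :
    (leftLe cs ((psiRWord cs ω x)⁻¹ * x) x ∧ BruhatLe cs ((psiRWord cs ω x)⁻¹ * x) y) ∧
      ∀ z, leftLe cs z x → BruhatLe cs z y →
        BruhatLe cs z ((psiRWord cs ω x)⁻¹ * x) := by
  have hrevω : cs.IsReduced ω.reverse := (cs.isReduced_reverse_iff ω).mpr hred
  have hπrevω : cs.wordProd ω.reverse = y := by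
    rw [cs.wordProd_reverse, hω, inv_inv]
  -- data for x itself
  obtain ⟨u, v, hvu, huω, hxu, hzv, hlx, hlz, hfin⟩ :=
    Aux.evolve cs ω x x (Aux.leftLe_refl cs x)
  have hz0 : (psiRWord cs ω x)⁻¹ * x = (cs.wordProd u)⁻¹ := by
    rw [hxu]
    group
  have hlenu : cs.length (cs.wordProd u) = u.length := by
    have h2 := cs.length_mul_le (psiRWord cs ω x) (cs.wordProd u)⁻¹
    rw [show psiRWord cs ω x * (cs.wordProd u)⁻¹ = x by rw [hxu]; group,
      cs.length_inv] at h2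
    have h3 := cs.length_wordProd_le u
    omega
  have hured : cs.IsReduced u := hlenu
  have hrevu : cs.IsReduced u.reverse := (cs.isReduced_reverse_iff u).mpr hured
  have hπrevu : cs.wordProd u.reverse = (psiRWord cs ω x)⁻¹ * x := by
    rw [cs.wordProd_reverse, hz0]
  refine ⟨⟨?_, ?_⟩, ?_⟩
  · -- leftLe
    show cs.length (x * ((psiRWord cs ω x)⁻¹ * x)⁻¹) + cs.length ((psiRWord cs ω x)⁻¹ * x)
        = cs.length x
    have e1 : x * ((psiRWord cs ω x)⁻¹ * x)⁻¹ = psiRWord cs ω x := by group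
    rw [e1, hz0, cs.length_inv, hlenu]
    exact hlx
  · -- BruhatLe (A⁻¹x) y
    have h1 := Aux.subword_le cs hrevω huω.reverse hrevu
    rwa [hπrevu, hπrevω] at h1
  · intro z hzx hzy
    have hone : psiRWord cs ω z = 1 := Aux.psiRWord_eq_one_of_le cs ω hred y z hω hzy
    obtain ⟨u₂, v₂, hvu₂, huω₂, hxu₂, hzv₂, hlx₂, hlz₂, _⟩ := Aux.evolve cs ω x z hzx
    rw [hone] at hzv₂ hlz₂
    rw [cs.length_one] at hlz₂
    have hπv : cs.wordProd v₂ = z⁻¹ := (inv_eq_of_mul_eq_one_right hzv₂.symm).symm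
    have hv₂red : cs.IsReduced v₂ := by
      show cs.length (cs.wordProd v₂) = v₂.length
      rw [hπv, cs.length_inv]
      omega
    have hu₂len : cs.length (cs.wordProd u₂) = u₂.length := by
      have h2 := cs.length_mul_le (psiRWord cs ω x) (cs.wordProd u₂)⁻¹
      rw [show psiRWord cs ω x * (cs.wordProd u₂)⁻¹ = x by rw [hxu₂]; group,
        cs.length_inv] at h2
      have h3 := cs.length_wordProd_le u₂
      omega
    have hu₂red : cs.IsReduced u₂ := hu₂len
    have h1 := Aux.subword_le cs ((cs.isReduced_reverse_iff u₂).mpr hu₂red) hvu₂.reverse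
      ((cs.isReduced_reverse_iff v₂).mpr hv₂red)
    rw [cs.wordProd_reverse, cs.wordProd_reverse, hπv, inv_inv] at h1
    have e2 : (cs.wordProd u₂)⁻¹ = (psiRWord cs ω x)⁻¹ * x := by
      rw [hxu₂]
      group
    rwa [e2] at h1
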